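/- Every 2-connected non-bipartite graph in which every odd cycle is a triangle is either K₄ or a book B*ᵣ (r triangles sharing a common edge) for some r ≥ 1. -/

import Mathlib

open SimpleGraph

/-- `G` is 2-connected: at least 3 vertices and deleting any single vertex
leaves a connected graph. -/
def TwoConnected {V : Type*} [Fintype V] (G : SimpleGraph V) : Prop :=
  3 ≤ Fintype.card V ∧ ∀ v : V, (G.induce ({v}ᶜ : Set V)).Connected

/-- The book `B*_r`: `r` triangles sharing a common edge, i.e. `K₂ + (r` independent
vertices`)`. -/
def book (r : ℕ) : SimpleGraph (Fin 2 ⊕ Fin r) where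
  Adj a b := a ≠ b ∧ (a.isLeft = true ∨ b.isLeft = true)
  symm := ⟨fun a b ⟨h1, h2⟩ => ⟨h1.symm, h2.symm⟩⟩
  loopless := ⟨fun a h => h.1 rfl⟩

namespace StmtSix

open SimpleGraph Walk

variable {V : Type*} {G : SimpleGraph V}

private lemma path_loop_nil {u : V} {q : G.Walk u u} (hq : q.IsPath) : q = Walk.nil := by
  cases q with
  | nil => rfl
  | cons h p =>
    rw [Walk.cons_isPath_iff] at hq
    exact absurd (Walk.end_mem_support p) hq.2

private lemma edge_start_end {u b : V} (hub : G.Adj u b) :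
    ∀ (p : G.Walk b u), p.IsPath → s(u, b) ∈ p.edges → p.length = 1 := by
  intro p hp he
  cases p with
  | nil => simp at he
  | @cons _ b' _ h' q =>
    rw [Walk.edges_cons, List.mem_cons] at he
    rcases he with he | he
    · rw [Sym2.eq_iff] at he
      rcases he with ⟨h1, _⟩ | ⟨h1, _⟩
      · exact absurd h1 hub.ne
      · subst h1
        rw [Walk.cons_isPath_iff] at hp
        rw [path_loop_nil hp.1]
        simp
    · exfalso
      rw [Walk.cons_isPath_iff] at hp
      exact hp.2 (Walk.snd_mem_support_of_mem_edges q he)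

private lemma closed_walk_split [DecidableEq V] {u : V} (w : G.Walk u u)
    (hodd : Odd w.length) (hnc : ¬ w.IsCycle) :
    ∃ (v : V) (c d : G.Walk v v), c.length + d.length = w.length ∧
      c.length ≠ 0 ∧ d.length ≠ 0 := by
  have hlen : w.length ≠ 0 := by
    rintro h; rw [h] at hodd; simp at hodd
  by_cases hnod : w.support.tail.Nodup
  · exfalso
    cases w with
    | nil => simp at hlen
    | @cons _ b _ h p =>
      rw [Walk.support_cons, List.tail_cons] at hnod
      have hp : p.IsPath := (Walk.isPath_def p).mpr hnod
      have he : s(u, b) ∈ p.edges := by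
        by_contra he
        exact hnc ((Walk.cons_isCycle_iff p h).mpr ⟨hp, he⟩)
      have := edge_start_end h p hp he
      rw [Walk.length_cons, this] at hodd
      simp [Nat.odd_iff] at hodd
  · obtain ⟨v, hdup⟩ := List.exists_duplicate_iff_not_nodup.mpr hnod
    have hcount : 2 ≤ w.support.tail.count v := List.duplicate_iff_two_le_count.mp hdup
    have hv : v ∈ w.support := by
      have : v ∈ w.support.tail := hdup.mem
      exact List.mem_of_mem_tail this
    set c0 := w.rotate v hv with hc0
    have hlenc0 : c0.length = w.length := by
      have hspec := Walk.take_spec w hv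
      have h1 : (w.takeUntil v hv).length + (w.dropUntil v hv).length = w.length := by
        conv_rhs => rw [← hspec]
        rw [Walk.length_append]
      rw [hc0, Walk.rotate, Walk.length_append]
      omega
    have hcount0 : 2 ≤ c0.support.tail.count v := by
      have hr := Walk.support_rotate w v hv
      rw [(hr.perm).count_eq] at *
      exact hcount
    cases hc : c0 with
    | nil =>
      exfalso
      have := hlenc0
      rw [hc] at this
      simp at this
      omega
    | @cons _ b2 _ h2 q =>
      have hq2 : 2 ≤ q.support.count v := by
        rw [hc, Walk.support_cons, List.tail_cons] at hcount0
        exact hcount0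
      have hvq : v ∈ q.support := List.count_pos_iff.mp (by omega)
      have hspec := Walk.take_spec q hvq
      have hcount_take := Walk.count_support_takeUntil_eq_one q hvq
      have hmem_drop : v ∈ (q.dropUntil v hvq).support.tail := by
        have : q.support = (q.takeUntil v hvq).support ++ (q.dropUntil v hvq).support.tail := by
          conv_lhs => rw [← hspec]
          rw [Walk.support_append]
        rw [this, List.count_append, hcount_take] at hq2
        exact List.count_pos_iff.mp (by omega)
      have hdrop_ne : (q.dropUntil v hvq).length ≠ 0 := by
        intro h0
        have : q.dropUntil v hvq = Walk.nil := Walk.nil_iff_eq_nil.mp (Walk.length_eq_zero_iff.mp h0)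
        rw [this] at hmem_drop
        simp at hmem_drop
      refine ⟨v, Walk.cons h2 (q.takeUntil v hvq), q.dropUntil v hvq, ?_, by simp, hdrop_ne⟩
      have hql : (q.takeUntil v hvq).length + (q.dropUntil v hvq).length = q.length := by
        conv_rhs => rw [← hspec]
        rw [Walk.length_append]
      have : c0.length = q.length + 1 := by rw [hc]; simp
      rw [Walk.length_cons]
      omega

private lemma exists_odd_cycle_of_odd_closed_walk [DecidableEq V] :
    ∀ (n : ℕ) {u : V} (w : G.Walk u u), w.length = n → Odd n →
    ∃ (v : V) (c : G.Walk v v), c.IsCycle ∧ Odd c.length := by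
  intro n
  induction n using Nat.strong_induction_on with
  | _ n ih =>
    intro u w hw hodd
    by_cases hc : w.IsCycle
    · exact ⟨u, w, hc, hw ▸ hodd⟩
    · obtain ⟨v, c, d, hsum, hc0, hd0⟩ := closed_walk_split w (hw ▸ hodd) hc
      rcases Nat.even_or_odd c.length with hce | hco
      · have hdo : Odd d.length := by
          rcases hce with ⟨k, hk⟩
          rcases hodd with ⟨m, hm⟩
          refine Nat.odd_iff.mpr ?_
          omega
        exact ih d.length (by omega) d rfl hdo
      · exact ih c.length (by omega) c rfl hco

private lemma exists_odd_closed_walk (hnb : ¬ G.Colorable 2) :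
    ∃ (u : V) (w : G.Walk u u), Odd w.length := by
  by_contra h
  push_neg at h
  simp only [Nat.not_odd_iff_even] at h
  apply hnb
  obtain ⟨f⟩ : Nonempty (∀ v : V, G.Walk v (G.connectedComponentMk v).out) :=
    ⟨fun v => Classical.choice
      (ConnectedComponent.exact ((G.connectedComponentMk v).out_eq.symm))⟩
  have hcol : G.Coloring Bool := by
    refine Coloring.mk (fun v => decide (Odd (f v).length)) ?_
    intro a b hadj heq
    have hr : (G.connectedComponentMk a).out = (G.connectedComponentMk b).out := by
      rw [ConnectedComponent.connectedComponentMk_eq_of_adj hadj]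
    have hiff : Odd (f a).length ↔ Odd (f b).length := by
      simpa using congrArg (· = true) heq |>.to_iff
    set w : G.Walk a a :=
      ((Walk.cons hadj (f b)).copy rfl hr.symm).append (f a).reverse with hw
    have hev := h a w
    rw [hw, Walk.length_append, Walk.length_copy, Walk.length_cons,
      Walk.length_reverse] at hev
    rw [Nat.even_iff] at hev
    rw [Nat.odd_iff, Nat.odd_iff] at hiff
    omega
  simpa using hcol.colorable

private lemma exists_triangle [DecidableEq V] (hnb : ¬ G.Colorable 2)
    (htri : ∀ (u : V) (w : G.Walk u u), w.IsCycle → Odd w.length → w.length = 3) :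
    ∃ x y z : V, G.Adj x y ∧ G.Adj y z ∧ G.Adj z x := by
  obtain ⟨u, w, hodd⟩ := exists_odd_closed_walk hnb
  obtain ⟨v, c, hc, hcodd⟩ := exists_odd_cycle_of_odd_closed_walk w.length w rfl hodd
  have h3 := htri v c hc hcodd
  cases c with
  | nil => simp at h3
  | @cons _ a _ h1 p =>
    cases p with
    | nil => simp at h3
    | @cons _ b _ h2 q =>
      cases q with
      | nil => simp at h3
      | @cons _ d _ h3' r =>
        simp only [Walk.length_cons] at h3
        have hr0 : r.length = 0 := by omega
        have hdv : d = v := Walk.eq_of_length_eq_zero hr0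
        rw [hdv] at h3'
        exact ⟨v, a, b, h1, h2, h3'⟩

private lemma isPath_concat {u v w : V} {p : G.Walk u v} (hp : p.IsPath) (h : G.Adj v w)
    (hw : w ∉ p.support) : (p.concat h).IsPath := by
  rw [Walk.isPath_def, Walk.support_concat]
  exact List.Nodup.append (Walk.isPath_def p |>.mp hp) (List.nodup_singleton w)
    (by simpa [List.disjoint_singleton] using hw)

private lemma cycle_of_path {x v t : V} (hxv : G.Adj x v) (htx : G.Adj t x)
    (P : G.Walk v t) (hP : P.IsPath) (hx : x ∉ P.support) (hvt : v ≠ t) :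
    ∃ c : G.Walk x x, c.IsCycle ∧ c.length = P.length + 2 := by
  refine ⟨Walk.cons hxv (P.concat htx), ?_, by simp⟩
  rw [Walk.cons_isCycle_iff]
  refine ⟨isPath_concat hP htx hx, ?_⟩
  rw [Walk.edges_concat, List.concat_eq_append, List.mem_append]
  rintro (hmem | hmem)
  · exact hx (Walk.fst_mem_support_of_mem_edges P hmem)
  · simp only [List.mem_singleton] at hmem
    rw [Sym2.eq_iff] at hmem
    rcases hmem with ⟨h1, h2⟩ | ⟨h1, h2⟩
    · exact hxv.ne h2.symm
    · exact hvt h2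

private lemma first_hit [DecidableEq V] {v t o : V} (p : G.Walk v t) (hp : p.IsPath)
    (hto : t ≠ o) :
    ∃ (t' o' : V) (p' : G.Walk v t'), ((t' = t ∧ o' = o) ∨ (t' = o ∧ o' = t)) ∧
      p'.IsPath ∧ p'.support ⊆ p.support ∧ o' ∉ p'.support := by
  by_cases ho : o ∈ p.support
  · refine ⟨o, t, p.takeUntil o ho, Or.inr ⟨rfl, rfl⟩, hp.takeUntil ho,
      Walk.support_takeUntil_subset p ho, ?_⟩
    intro ht
    have hspec := Walk.take_spec p ho
    have hsup : p.support = (p.takeUntil o ho).support ++ (p.dropUntil o ho).support.tail := by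
      conv_lhs => rw [← hspec]
      rw [Walk.support_append]
    have ht2 : t ∈ (p.dropUntil o ho).support.tail := by
      have : t ∈ (p.dropUntil o ho).support := Walk.end_mem_support _
      rw [Walk.support_eq_cons (p.dropUntil o ho)] at this
      rcases List.mem_cons.mp this with h | h
      · exact absurd h hto
      · exact h
    have hnodup := (Walk.isPath_def p).mp hp
    rw [hsup] at hnodup
    exact (List.disjoint_of_nodup_append hnodup) ht ht2
  · exact ⟨t, o, p, Or.inl ⟨rfl, rfl⟩, hp, fun _ h => h, ho⟩

private lemma L3core (htri : ∀ (u : V) (w : G.Walk u u), w.IsCycle → Odd w.length → w.length = 3)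
    {x v t o : V} (hxv : G.Adj x v) (htx : G.Adj t x) (hto : G.Adj t o) (hox : G.Adj o x)
    (hvt : v ≠ t) (hvo : v ≠ o) (hnadj : ¬ G.Adj v t)
    (P : G.Walk v t) (hP : P.IsPath) (hxP : x ∉ P.support) (hoP : o ∉ P.support) : False := by
  rcases Nat.even_or_odd P.length with hev | hod
  · have hP' : (P.concat hto).IsPath := isPath_concat hP hto hoP
    have hxP' : x ∉ (P.concat hto).support := by
      rw [Walk.support_concat, List.mem_append]
      rintro (h | h)
      · exact hxP h
      · simp at h; exact hox.ne h.symm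
    obtain ⟨c, hc, hlen⟩ := cycle_of_path hxv hox (P.concat hto) hP' hxP' hvo
    rw [Walk.length_concat] at hlen
    have h3 := htri x c hc (by rw [hlen, Nat.odd_iff]; rw [Nat.even_iff] at hev; omega)
    rw [h3] at hlen
    have : P.length = 0 := by omega
    exact hvt (Walk.eq_of_length_eq_zero this)
  · obtain ⟨c, hc, hlen⟩ := cycle_of_path hxv htx P hP hxP hvt
    have h3 := htri x c hc (by rw [hlen, Nat.odd_iff]; rw [Nat.odd_iff] at hod; omega)
    rw [h3] at hlen
    exact hnadj (Walk.adj_of_length_eq_one (p := P) (by omega))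

private lemma L3 [DecidableEq V]
    (hind : ∀ u : V, (G.induce ({u}ᶜ : Set V)).Connected)
    (htri : ∀ (u : V) (w : G.Walk u u), w.IsCycle → Odd w.length → w.length = 3)
    {x y z v : V} (hxy : G.Adj x y) (hyz : G.Adj y z) (hzx : G.Adj z x)
    (hvx : G.Adj v x) (hvy : ¬ G.Adj v y) (hvz : ¬ G.Adj v z)
    (hvy' : v ≠ y) (hvz' : v ≠ z) : False := by
  have hconn := hind x
  have hvmem : v ∈ ({x}ᶜ : Set V) := by simp [hvx.ne]
  have hymem : y ∈ ({x}ᶜ : Set V) := by simp [hxy.ne']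
  obtain ⟨W0⟩ := hconn ⟨v, hvmem⟩ ⟨y, hymem⟩
  set w : G.Walk v y := W0.map (SimpleGraph.Embedding.induce ({x}ᶜ : Set V)).toHom with hwdef
  have hxw : x ∉ w.support := by
    simp only [hwdef]
    intro hmem
    have hmem' : x ∈ (W0.map (SimpleGraph.Embedding.induce ({x}ᶜ : Set V)).toHom).support := hmem
    rw [Walk.support_map] at hmem'
    obtain ⟨a, _, ha2⟩ := List.mem_map.mp hmem'
    exact a.2 (by simpa using ha2)
  have hxb : x ∉ w.bypass.support := fun h => hxw (Walk.support_bypass_subset w h)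
  obtain ⟨t', o', P, hcase, hPpath, hPsub, hoP⟩ := first_hit w.bypass w.bypass_isPath hyz.ne
  have hxP : x ∉ P.support := fun h => hxb (hPsub h)
  rcases hcase with ⟨rfl, rfl⟩ | ⟨rfl, rfl⟩
  · exact L3core htri hvx.symm hxy.symm hyz hzx hvy' hvz' hvy P hPpath hxP hoP
  · exact L3core htri hvx.symm hzx hyz.symm hxy.symm hvz' hvy' hvz P hPpath hxP hoP

private lemma no5 (htri : ∀ (u : V) (w : G.Walk u u), w.IsCycle → Odd w.length → w.length = 3)
    {a b c d e : V} (h1 : G.Adj a b) (h2 : G.Adj b c) (h3 : G.Adj c d) (h4 : G.Adj d e)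
    (h5 : G.Adj e a) (hac : a ≠ c) (had : a ≠ d) (hbd : b ≠ d) (hbe : b ≠ e) (hce : c ≠ e) :
    False := by
  have hab := h1.ne; have hbc := h2.ne; have hcd := h3.ne; have hde := h4.ne; have hea := h5.ne
  set w : G.Walk a a :=
    Walk.cons h1 (Walk.cons h2 (Walk.cons h3 (Walk.cons h4 (Walk.cons h5 Walk.nil)))) with hw
  have hcyc : w.IsCycle := by
    rw [Walk.isCycle_def, Walk.isTrail_def]
    refine ⟨?_, by simp [hw], ?_⟩
    · simp only [hw, Walk.edges_cons, Walk.edges_nil, List.nodup_cons, List.mem_cons,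
        List.mem_singleton, List.not_mem_nil, Sym2.eq_iff, List.nodup_nil, and_true,
        List.mem_nil_iff, or_false]
      tauto
    · simp only [hw, Walk.support_cons, Walk.support_nil, List.tail_cons, List.nodup_cons,
        List.mem_cons, List.mem_singleton, List.not_mem_nil, or_false, List.nodup_nil, and_true,
        List.mem_nil_iff]
      tauto
  have := htri a w hcyc (by simp [hw]; decide)
  simp [hw] at this

section
variable [DecidableEq V]

private lemma LstepB
    (hind : ∀ u : V, (G.induce ({u}ᶜ : Set V)).Connected)
    (htri : ∀ (u : V) (w : G.Walk u u), w.IsCycle → Odd w.length → w.length = 3)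
    {a b c u v : V} (hab : G.Adj a b) (hbc : G.Adj b c) (hca : G.Adj c a)
    (hua : G.Adj u a) (hub : G.Adj u b) (huc : u ≠ c) (hadj : G.Adj u v)
    (hva' : v ≠ a) (hvb' : v ≠ b) (hvc' : v ≠ c)
    (hp1 : ¬(G.Adj v a ∧ G.Adj v b)) (hp2 : ¬(G.Adj v b ∧ G.Adj v c))
    (hp3 : ¬(G.Adj v c ∧ G.Adj v a)) : False := by
  have hor : G.Adj v a ∨ G.Adj v b := by
    by_contra hno
    push_neg at hno
    exact L3 hind htri hua hab hub.symm hadj.symm hno.1 hno.2 hva' hvb'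
  rcases hor with hva | hvb
  · have hvb : ¬ G.Adj v b := fun h => hp1 ⟨hva, h⟩
    have hvc : ¬ G.Adj v c := fun h => hp3 ⟨h, hva⟩
    exact no5 htri hadj.symm hub hbc hca hva.symm hvb' hvc' huc hua.ne hab.ne'
  · have hva : ¬ G.Adj v a := fun h => hp1 ⟨h, hvb⟩
    have hvc : ¬ G.Adj v c := fun h => hp2 ⟨hvb, h⟩
    exact no5 htri hadj.symm hua hca.symm hbc.symm hvb.symm hva' hvc' huc hub.ne hab.ne

private def Good (x y z v : V) (G : SimpleGraph V) : Prop :=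
  v = x ∨ v = y ∨ v = z ∨ (G.Adj v x ∧ G.Adj v y) ∨ (G.Adj v y ∧ G.Adj v z) ∨
    (G.Adj v z ∧ G.Adj v x)

private lemma Lstep
    (hind : ∀ u : V, (G.induce ({u}ᶜ : Set V)).Connected)
    (htri : ∀ (u : V) (w : G.Walk u u), w.IsCycle → Odd w.length → w.length = 3)
    {x y z : V} (hxy : G.Adj x y) (hyz : G.Adj y z) (hzx : G.Adj z x) {u v : V}
    (hadj : G.Adj u v) (hu : Good x y z u G) : Good x y z v G := by
  by_contra hv
  rw [Good] at hv
  push_neg at hv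
  obtain ⟨hvx', hvy', hvz', hq1, hq2, hq3⟩ := hv
  have hp1 : ¬(G.Adj v x ∧ G.Adj v y) := fun h => hq1 h.1 h.2
  have hp2 : ¬(G.Adj v y ∧ G.Adj v z) := fun h => hq2 h.1 h.2
  have hp3 : ¬(G.Adj v z ∧ G.Adj v x) := fun h => hq3 h.1 h.2
  have case_x : G.Adj v x → False := fun hvx =>
    L3 hind htri hxy hyz hzx hvx (fun h => hp1 ⟨hvx, h⟩) (fun h => hp3 ⟨h, hvx⟩) hvy' hvz'
  have case_y : G.Adj v y → False := fun hvy =>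
    L3 hind htri hyz hzx hxy hvy (fun h => hp2 ⟨hvy, h⟩) (fun h => hp1 ⟨h, hvy⟩) hvz' hvx'
  have case_z : G.Adj v z → False := fun hvz =>
    L3 hind htri hzx hxy hyz hvz (fun h => hp3 ⟨hvz, h⟩) (fun h => hp2 ⟨h, hvz⟩) hvx' hvy'
  rcases hu with rfl | rfl | rfl | ⟨h1, h2⟩ | ⟨h1, h2⟩ | ⟨h1, h2⟩
  · exact case_x hadj.symm
  · exact case_y hadj.symm
  · exact case_z hadj.symm
  · by_cases huz : u = z
    · subst huz; exact case_z hadj.symm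
    · exact LstepB hind htri hxy hyz hzx h1 h2 huz hadj hvx' hvy' hvz' hp1 hp2 hp3
  · by_cases hux : u = x
    · subst hux; exact case_x hadj.symm
    · exact LstepB hind htri hyz hzx hxy h1 h2 hux hadj hvy' hvz' hvx' hp2 hp3 hp1
  · by_cases huy : u = y
    · subst huy; exact case_y hadj.symm
    · exact LstepB hind htri hzx hxy hyz h1 h2 huy hadj hvz' hvx' hvy' hp3 hp1 hp2

private lemma Lgood
    (hind : ∀ u : V, (G.induce ({u}ᶜ : Set V)).Connected)
    (htri : ∀ (u : V) (w : G.Walk u u), w.IsCycle → Odd w.length → w.length = 3)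
    {x y z : V} (hxy : G.Adj x y) (hyz : G.Adj y z) (hzx : G.Adj z x)
    (hpre : G.Preconnected) (v : V) : Good x y z v G := by
  obtain ⟨w⟩ := hpre x v
  have key : ∀ (a b : V) (w : G.Walk a b), Good x y z a G → Good x y z b G := by
    intro a b w
    induction w with
    | nil => exact id
    | cons h p ih => exact fun ha => ih (Lstep hind htri hxy hyz hzx h ha)
  exact key x v w (Or.inl rfl)

end

private lemma conn_of_2conn [Fintype V] (hcard : 3 ≤ Fintype.card V)
    (hind : ∀ u : V, (G.induce ({u}ᶜ : Set V)).Connected) : G.Connected := by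
  classical
  have hne : Nonempty V := Fintype.card_pos_iff.mp (by omega)
  rw [connected_iff]
  refine ⟨fun a b => ?_, hne⟩
  obtain ⟨c, hca, hcb⟩ : ∃ c : V, c ≠ a ∧ c ≠ b := by
    by_contra hno
    push_neg at hno
    have hsub : (Finset.univ : Finset V) ⊆ {a, b} := by
      intro t _
      rcases em (t = a) with h' | h'
      · simp [h']
      · simp [hno t h']
    have := Finset.card_le_card hsub
    simp only [Finset.card_univ] at this
    have h2 : ({a, b} : Finset V).card ≤ 2 := Finset.card_insert_le a {b} |>.trans (by simp)
    omega
  obtain ⟨W⟩ := (hind c) ⟨a, by simp [Ne.symm hca]⟩ ⟨b, by simp [Ne.symm hcb]⟩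
  exact ⟨W.map (SimpleGraph.Embedding.induce ({c}ᶜ : Set V)).toHom⟩

private lemma K4case
    (htri : ∀ (u : V) (w : G.Walk u u), w.IsCycle → Odd w.length → w.length = 3)
    {x y z v : V} (hxy : G.Adj x y) (hyz : G.Adj y z) (hzx : G.Adj z x)
    (hvx : G.Adj v x) (hvy : G.Adj v y) (hvz : G.Adj v z)
    (hall : ∀ w : V, w = x ∨ w = y ∨ w = z ∨
      (G.Adj w x ∧ G.Adj w y) ∨ (G.Adj w y ∧ G.Adj w z) ∨ (G.Adj w z ∧ G.Adj w x)) :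
    Nonempty (G ≃g (⊤ : SimpleGraph (Fin 4))) := by
  have hVall : ∀ w : V, w = x ∨ w = y ∨ w = z ∨ w = v := by
    intro w
    by_contra hno
    push_neg at hno
    obtain ⟨hwx, hwy, hwz, hwv⟩ := hno
    rcases hall w with h | h | h | ⟨h1, h2⟩ | ⟨h1, h2⟩ | ⟨h1, h2⟩
    · exact hwx h
    · exact hwy h
    · exact hwz h
    · exact no5 htri h1 hzx.symm hvz.symm hvy h2.symm hwz hwv hvx.ne' hxy.ne hyz.ne'
    · exact no5 htri h1 hxy.symm hvx.symm hvz h2.symm hwx hwv hvy.ne' hyz.ne hzx.ne'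
    · exact no5 htri h1 hyz.symm hvy.symm hvx h2.symm hwy hwv hvz.ne' hzx.ne hxy.ne'
  have hAdjAll : ∀ a b : V, a ≠ b → G.Adj a b := by
    have h1 := hxy; have h2 := hyz; have h3 := hzx; have h4 := hvx; have h5 := hvy
    have h6 := hvz
    have h1' := hxy.symm; have h2' := hyz.symm; have h3' := hzx.symm
    have h4' := hvx.symm; have h5' := hvy.symm; have h6' := hvz.symm
    intro a b hne
    rcases hVall a with rfl | rfl | rfl | rfl <;> rcases hVall b with rfl | rfl | rfl | rfl <;>
      first | exact absurd rfl hne | assumption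
  classical
  set f : Fin 4 → V := ![x, y, z, v] with hf
  have hinj : Function.Injective f := by
    have d1 := hxy.ne; have d2 := hyz.ne; have d3 := hzx.ne
    have d4 := hvx.ne; have d5 := hvy.ne; have d6 := hvz.ne
    intro i j hij
    fin_cases i <;> fin_cases j <;> simp_all [hf] <;> tauto
  have hsurj : Function.Surjective f := by
    intro w
    rcases hVall w with rfl | rfl | rfl | rfl
    · exact ⟨0, rfl⟩
    · exact ⟨1, rfl⟩
    · exact ⟨2, rfl⟩
    · exact ⟨3, rfl⟩
  set e := Equiv.ofBijective f ⟨hinj, hsurj⟩ with he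
  refine ⟨⟨e.symm, ?_⟩⟩
  intro p q
  simp only [top_adj]
  rw [e.symm.injective.ne_iff]
  exact ⟨fun h => hAdjAll p q h, fun h => h.ne⟩

private lemma Bookcase [Fintype V]
    (htri : ∀ (u : V) (w : G.Walk u u), w.IsCycle → Odd w.length → w.length = 3)
    {a b c : V} (hab : G.Adj a b) (hbc : G.Adj b c) (hca : G.Adj c a)
    (hnK : ∀ v : V, ¬(G.Adj v a ∧ G.Adj v b ∧ G.Adj v c))
    (hpages : ∀ w : V, w ≠ a → w ≠ b → w ≠ c → (G.Adj w a ∧ G.Adj w b)) :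
    ∃ r : ℕ, 1 ≤ r ∧ Nonempty (G ≃g book r) := by
  classical
  have hSadj : ∀ w : V, w ≠ a → w ≠ b → (G.Adj w a ∧ G.Adj w b) := by
    intro w hwa hwb
    by_cases hwc : w = c
    · subst hwc; exact ⟨hca, hbc.symm⟩
    · exact hpages w hwa hwb hwc
  have hnc : ∀ w : V, w ≠ a → w ≠ b → w ≠ c → ¬ G.Adj w c := by
    intro w hwa hwb hwc hadj
    exact hnK w ⟨(hpages w hwa hwb hwc).1, (hpages w hwa hwb hwc).2, hadj⟩
  have hpp : ∀ w w' : V, w ≠ a → w ≠ b → w' ≠ a → w' ≠ b → ¬ G.Adj w w' := by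
    intro w w' hwa hwb hw'a hw'b hadj
    by_cases hw'c : w' = c
    · by_cases hwc : w = c
      · rw [hwc, hw'c] at hadj; exact G.irrefl hadj
      · rw [hw'c] at hadj; exact hnc w hwa hwb hwc hadj
    · by_cases hwc : w = c
      · rw [hwc] at hadj; exact hnc w' hw'a hw'b hw'c hadj.symm
      · exact no5 htri hadj (hpages w' hw'a hw'b hw'c).1 hca.symm hbc.symm
          ((hpages w hwa hwb hwc).2).symm hwa hwc hw'c hw'b hab.ne
  set S : Set V := {w : V | w ≠ a ∧ w ≠ b} with hS
  have hcS : c ∈ S := ⟨hca.ne, hbc.ne'⟩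
  set r := Fintype.card S with hr
  have hr1 : 1 ≤ r := Fintype.card_pos_iff.mpr ⟨⟨c, hcS⟩⟩
  set e2 : S ≃ Fin r := Fintype.equivFin S with he2
  set f : Fin 2 ⊕ Fin r → V := Sum.elim ![a, b] (fun i => ((e2.symm i : S) : V)) with hf
  have hinj : Function.Injective f := by
    rintro (i | i) (j | j) h <;> simp only [hf, Sum.elim_inl, Sum.elim_inr] at h
    · fin_cases i <;> fin_cases j <;> simp_all <;>
        exact absurd h (by first | exact hab.ne | exact hab.ne')
    · exact absurd h.symm (by fin_cases i <;> simp <;>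
        [exact (e2.symm j).2.1; exact (e2.symm j).2.2])
    · exact absurd h (by fin_cases j <;> simp <;>
        [exact (e2.symm i).2.1; exact (e2.symm i).2.2])
    · exact congrArg Sum.inr (e2.symm.injective (Subtype.ext h))
  have hsurj : Function.Surjective f := by
    intro w
    by_cases hwa : w = a
    · exact ⟨Sum.inl 0, by simp [hf, hwa]⟩
    · by_cases hwb : w = b
      · exact ⟨Sum.inl 1, by simp [hf, hwb]⟩
      · exact ⟨Sum.inr (e2 ⟨w, hwa, hwb⟩), by simp [hf]⟩
  have hkey : ∀ i j, (book r).Adj i j ↔ G.Adj (f i) (f j) := by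
    rintro (i | i) (j | j)
    · constructor
      · rintro ⟨hne, -⟩
        fin_cases i <;> fin_cases j <;> simp_all [hf] <;> first | exact hab | exact hab.symm
      · intro h
        refine ⟨fun heq => G.irrefl (heq ▸ h), Or.inl rfl⟩
    · constructor
      · intro _
        have := hSadj (e2.symm j : S) (e2.symm j).2.1 (e2.symm j).2.2
        fin_cases i <;> simp [hf] <;> [exact this.1.symm; exact this.2.symm]
      · intro _; exact ⟨by simp, Or.inl rfl⟩
    · constructor
      · intro _
        have := hSadj (e2.symm i : S) (e2.symm i).2.1 (e2.symm i).2.2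
        fin_cases j <;> simp [hf] <;> [exact this.1; exact this.2]
      · intro _; exact ⟨by simp, Or.inr rfl⟩
    · constructor
      · rintro ⟨hne, habs | habs⟩ <;> simp at habs
      · intro h
        exact absurd h (hpp _ _ (e2.symm i).2.1 (e2.symm i).2.2 (e2.symm j).2.1 (e2.symm j).2.2)
  refine ⟨r, hr1, ⟨⟨(Equiv.ofBijective f ⟨hinj, hsurj⟩).symm, ?_⟩⟩⟩
  intro p q
  rw [hkey]
  rw [Equiv.ofBijective_apply_symm_apply f ⟨hinj, hsurj⟩,
    Equiv.ofBijective_apply_symm_apply f ⟨hinj, hsurj⟩]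

private lemma pages_lemma
    (htri : ∀ (u : V) (w : G.Walk u u), w.IsCycle → Odd w.length → w.length = 3)
    {a b c v0 : V} (hab : G.Adj a b) (hbc : G.Adj b c) (hca : G.Adj c a)
    (hnK : ∀ v : V, ¬(G.Adj v a ∧ G.Adj v b ∧ G.Adj v c))
    (hgood : ∀ w : V, w = a ∨ w = b ∨ w = c ∨ (G.Adj w a ∧ G.Adj w b) ∨
      (G.Adj w b ∧ G.Adj w c) ∨ (G.Adj w c ∧ G.Adj w a))
    (hv0a : G.Adj v0 a) (hv0b : G.Adj v0 b) (hv0c : v0 ≠ c) :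
    ∀ w : V, w ≠ a → w ≠ b → w ≠ c → (G.Adj w a ∧ G.Adj w b) := by
  intro w hwa hwb hwc
  rcases hgood w with h | h | h | h | ⟨h1, h2⟩ | ⟨h1, h2⟩
  · exact absurd h hwa
  · exact absurd h hwb
  · exact absurd h hwc
  · exact h
  · exfalso
    have hv0w : v0 ≠ w := by
      rintro rfl
      exact hnK v0 ⟨hv0a, hv0b, h2⟩
    exact no5 htri hv0a hca.symm h2.symm h1 hv0b.symm hv0c hv0w (Ne.symm hwa) hab.ne hbc.ne'
  · exfalso
    have hv0w : v0 ≠ w := by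
      rintro rfl
      exact hnK v0 ⟨hv0a, hv0b, h1⟩
    exact no5 htri hv0b hbc h1.symm h2 hv0a.symm hv0c hv0w (Ne.symm hwb) hab.ne' hca.ne

end StmtSix

open StmtSix in
theorem stmt6 {V : Type*} [Fintype V] (G : SimpleGraph V)
    (h2c : TwoConnected G)
    (hnb : ¬ G.Colorable 2)
    (htri : ∀ (u : V) (w : G.Walk u u), w.IsCycle → Odd w.length → w.length = 3) :
    Nonempty (G ≃g (⊤ : SimpleGraph (Fin 4))) ∨
      ∃ r : ℕ, 1 ≤ r ∧ Nonempty (G ≃g book r) := by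
  classical
  obtain ⟨x, y, z, hxy, hyz, hzx⟩ := exists_triangle hnb htri
  have hconn := conn_of_2conn h2c.1 h2c.2
  have hgood : ∀ v : V, Good x y z v G :=
    fun v => Lgood h2c.2 htri hxy hyz hzx hconn.preconnected v
  have hgood' : ∀ v : V, v = x ∨ v = y ∨ v = z ∨ (G.Adj v x ∧ G.Adj v y) ∨
      (G.Adj v y ∧ G.Adj v z) ∨ (G.Adj v z ∧ G.Adj v x) := by
    intro v
    have := hgood v
    unfold Good at this
    exact this
  by_cases hK : ∃ v : V, G.Adj v x ∧ G.Adj v y ∧ G.Adj v z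
  · obtain ⟨v, hvx, hvy, hvz⟩ := hK
    exact Or.inl (K4case htri hxy hyz hzx hvx hvy hvz hgood')
  · push_neg at hK
    have hnK3 : ∀ v : V, ¬(G.Adj v x ∧ G.Adj v y ∧ G.Adj v z) := by
      intro v h
      exact (hK v h.1 h.2.1) h.2.2
    right
    by_cases hout : ∃ v : V, v ≠ x ∧ v ≠ y ∧ v ≠ z
    · obtain ⟨v0, hv0x, hv0y, hv0z⟩ := hout
      rcases hgood' v0 with h | h | h | ⟨h1, h2⟩ | ⟨h1, h2⟩ | ⟨h1, h2⟩
      · exact absurd h hv0x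
      · exact absurd h hv0y
      · exact absurd h hv0z
      · exact Bookcase htri hxy hyz hzx hnK3
          (pages_lemma htri hxy hyz hzx hnK3 hgood' h1 h2 hv0z)
      · have hnK3' : ∀ v : V, ¬(G.Adj v y ∧ G.Adj v z ∧ G.Adj v x) := by
          intro v h
          exact hnK3 v ⟨h.2.2, h.1, h.2.1⟩
        have hgood'' : ∀ v : V, v = y ∨ v = z ∨ v = x ∨ (G.Adj v y ∧ G.Adj v z) ∨
            (G.Adj v z ∧ G.Adj v x) ∨ (G.Adj v x ∧ G.Adj v y) := by
          intro v
          rcases hgood' v with h | h | h | h | h | h <;> tauto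
        exact Bookcase htri hyz hzx hxy hnK3'
          (pages_lemma htri hyz hzx hxy hnK3' hgood'' h1 h2 hv0x)
      · have hnK3' : ∀ v : V, ¬(G.Adj v z ∧ G.Adj v x ∧ G.Adj v y) := by
          intro v h
          exact hnK3 v ⟨h.2.1, h.2.2, h.1⟩
        have hgood'' : ∀ v : V, v = z ∨ v = x ∨ v = y ∨ (G.Adj v z ∧ G.Adj v x) ∨
            (G.Adj v x ∧ G.Adj v y) ∨ (G.Adj v y ∧ G.Adj v z) := by
          intro v
          rcases hgood' v with h | h | h | h | h | h <;> tauto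
        exact Bookcase htri hzx hxy hyz hnK3'
          (pages_lemma htri hzx hxy hyz hnK3' hgood'' h1 h2 hv0y)
    · push_neg at hout
      refine Bookcase htri hxy hyz hzx hnK3 ?_
      intro w hwx hwy hwz
      exact absurd (hout w hwx hwy) hwz
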